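/- ∫_{π/3}^{5π/6} sin(θ) · arccos(−(1/√3)·cot θ) dθ = π/4 + (1/2)·arcsin(1/3) + (1/2)·arccos(−1/3). -/

import Mathlib

open Real intervalIntegral Set

set_option maxHeartbeats 1000000 in
theorem triple_bubble_integral :
    ∫ θ in (π/3)..(5*π/6), Real.sin θ * Real.arccos (-(1 / Real.sqrt 3) * Real.cot θ)
      = π/4 + (1/2) * Real.arcsin (1/3) + (1/2) * Real.arccos (-(1/3)) := by
  have hpi := Real.pi_pos
  have hab : (π/3 : ℝ) ≤ 5*π/6 := by linarith
  have hs3 : (0:ℝ) < Real.sqrt 3 := Real.sqrt_pos.mpr (by norm_num)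
  have hs3sq : Real.sqrt 3 ^ 2 = 3 := Real.sq_sqrt (by norm_num)
  -- rewrite cot as cos/sin
  have hcot : ∀ θ : ℝ, Real.sin θ * Real.arccos (-(1 / Real.sqrt 3) * Real.cot θ)
      = Real.sin θ * Real.arccos (-(1 / Real.sqrt 3) * (Real.cos θ / Real.sin θ)) := by
    intro θ; rw [Real.cot_eq_cos_div_sin]
  simp_rw [hcot]
  set f : ℝ → ℝ := fun θ => Real.sin θ * Real.arccos (-(1 / Real.sqrt 3) * (Real.cos θ / Real.sin θ)) with hf
  set F : ℝ → ℝ := fun θ => -Real.cos θ * Real.arccos (-(1 / Real.sqrt 3) * (Real.cos θ / Real.sin θ))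
      - Real.arctan (Real.sqrt (3 - 4 * Real.cos θ ^ 2)) with hF
  have hsinpos : ∀ θ ∈ Icc (π/3) (5*π/6), 0 < Real.sin θ := by
    intro θ hθ
    exact Real.sin_pos_of_pos_of_lt_pi (by linarith [hθ.1]) (by linarith [hθ.2])
  have hFcont : ContinuousOn F (Icc (π/3) (5*π/6)) := by
    apply ContinuousOn.sub
    · apply ContinuousOn.mul (Continuous.continuousOn (by continuity))
      apply Real.continuous_arccos.comp_continuousOn
      apply ContinuousOn.mul continuousOn_const
      exact ContinuousOn.div Real.continuous_cos.continuousOn Real.continuous_sin.continuousOn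
        (fun θ hθ => (hsinpos θ hθ).ne')
    · apply Continuous.continuousOn; continuity
  have hfint : IntervalIntegrable f MeasureTheory.volume (π/3) (5*π/6) := by
    apply ContinuousOn.intervalIntegrable
    rw [uIcc_of_le hab]
    apply ContinuousOn.mul Real.continuous_sin.continuousOn
    apply Real.continuous_arccos.comp_continuousOn
    apply ContinuousOn.mul continuousOn_const
    exact ContinuousOn.div Real.continuous_cos.continuousOn Real.continuous_sin.continuousOn
      (fun θ hθ => (hsinpos θ hθ).ne')
  have hderiv : ∀ θ ∈ Ioo (π/3) (5*π/6), HasDerivAt F (f θ) θ := by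
    intro θ hθ
    have hsp : 0 < Real.sin θ := hsinpos θ (Ioo_subset_Icc_self hθ)
    have hsne : Real.sin θ ≠ 0 := hsp.ne'
    have hcos_lt : Real.cos θ < 1/2 := by
      have := Real.cos_lt_cos_of_nonneg_of_le_pi (by positivity : (0:ℝ) ≤ π/3) (by linarith [hθ.2.le] : θ ≤ π) hθ.1
      rwa [Real.cos_pi_div_three] at this
    have hcos_gt : -(Real.sqrt 3/2) < Real.cos θ := by
      have := Real.cos_lt_cos_of_nonneg_of_le_pi (by linarith [hθ.1] : (0:ℝ) ≤ θ) (by linarith : 5*π/6 ≤ π) hθ.2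
      have h56 : Real.cos (5*π/6) = -(Real.sqrt 3/2) := by
        rw [show (5*π/6 : ℝ) = π - π/6 by ring, Real.cos_pi_sub, Real.cos_pi_div_six]
      linarith [h56 ▸ this]
    have h13 : (1:ℝ) < Real.sqrt 3 := by nlinarith [hs3sq, hs3]
    have hcossq : Real.cos θ ^ 2 < 3/4 := by
      nlinarith [mul_pos (show (0:ℝ) < Real.sqrt 3/2 - Real.cos θ by linarith)
        (show (0:ℝ) < Real.cos θ + Real.sqrt 3/2 by linarith), hs3sq]
    have hpos : 0 < 3 - 4 * Real.cos θ ^ 2 := by linarith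
    have hsin2 : Real.sin θ ^ 2 = 1 - Real.cos θ ^ 2 := Real.sin_sq θ
    -- bounds on g
    set g : ℝ := -(1 / Real.sqrt 3) * (Real.cos θ / Real.sin θ) with hg
    have habs : |Real.cos θ| < Real.sqrt 3 * Real.sin θ := by
      rw [abs_lt]
      constructor <;> nlinarith [hs3sq, hs3, hsp, abs_nonneg (Real.cos θ)]
    have hglt : |g| < 1 := by
      rw [hg, abs_mul, abs_neg, abs_div, abs_div, abs_one, abs_of_pos hs3, abs_of_pos hsp]
      rw [div_mul_div_comm, one_mul, div_lt_one (by positivity)]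
      exact habs
    have hgne1 : g ≠ 1 := by intro h; rw [h] at hglt; simp at hglt
    have hgnem1 : g ≠ -1 := by intro h; rw [h] at hglt; simp at hglt
    -- key sqrt identity
    have hkey : Real.sqrt (1 - g^2) = Real.sqrt (3 - 4 * Real.cos θ ^ 2) / (Real.sqrt 3 * Real.sin θ) := by
      have h1 : 1 - g^2 = (3 - 4 * Real.cos θ ^ 2) / (Real.sqrt 3 * Real.sin θ)^2 := by
        rw [hg]; field_simp; nlinarith [hs3sq, hsin2]
      rw [h1, Real.sqrt_div hpos.le, Real.sqrt_sq (by positivity)]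
    -- derivatives
    have hc : HasDerivAt Real.cos (-Real.sin θ) θ := Real.hasDerivAt_cos θ
    have hsd : HasDerivAt Real.sin (Real.cos θ) θ := Real.hasDerivAt_sin θ
    have hdiv : HasDerivAt (fun t => Real.cos t / Real.sin t)
        ((-Real.sin θ * Real.sin θ - Real.cos θ * Real.cos θ) / Real.sin θ ^ 2) θ := hc.div hsd hsne
    have hgd : HasDerivAt (fun t => -(1 / Real.sqrt 3) * (Real.cos t / Real.sin t))
        (-(1 / Real.sqrt 3) * ((-Real.sin θ * Real.sin θ - Real.cos θ * Real.cos θ) / Real.sin θ ^ 2)) θ :=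
      hdiv.const_mul _
    have harc : HasDerivAt (fun t => Real.arccos (-(1 / Real.sqrt 3) * (Real.cos t / Real.sin t)))
        (-(1 / Real.sqrt (1 - g^2)) * (-(1 / Real.sqrt 3) * ((-Real.sin θ * Real.sin θ - Real.cos θ * Real.cos θ) / Real.sin θ ^ 2))) θ :=
      by have := (Real.hasDerivAt_arccos hgnem1 hgne1).comp θ hgd; exact this
    have hF1 := hc.neg.mul harc
    have hinner : HasDerivAt (fun t => 3 - 4 * Real.cos t ^ 2)
        (-(4 * (2 * Real.cos θ ^ 1 * -Real.sin θ))) θ := ((hc.pow 2).const_mul 4).const_sub 3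
    have hsqrt : HasDerivAt (fun t => Real.sqrt (3 - 4 * Real.cos t ^ 2))
        (1 / (2 * Real.sqrt (3 - 4 * Real.cos θ ^ 2)) * -(4 * (2 * Real.cos θ ^ 1 * -Real.sin θ))) θ :=
      (Real.hasDerivAt_sqrt hpos.ne').comp θ hinner
    have harct : HasDerivAt (fun t => Real.arctan (Real.sqrt (3 - 4 * Real.cos t ^ 2)))
        (1 / (1 + Real.sqrt (3 - 4 * Real.cos θ ^ 2) ^ 2) *
          (1 / (2 * Real.sqrt (3 - 4 * Real.cos θ ^ 2)) * -(4 * (2 * Real.cos θ ^ 1 * -Real.sin θ)))) θ :=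
      (Real.hasDerivAt_arctan _).comp θ hsqrt
    have hcomb := hF1.sub harct
    refine hcomb.congr_deriv (Eq.symm ?_)
    rw [hf]
    simp only [Pi.neg_apply]
    rw [hkey, Real.sq_sqrt hpos.le]
    have hsq2 : (0:ℝ) < Real.sqrt (3 - 4 * Real.cos θ ^ 2) := Real.sqrt_pos.mpr hpos
    have hm1 : -Real.sin θ * Real.sin θ - Real.cos θ * Real.cos θ = -1 := by
      nlinarith [Real.sin_sq_add_cos_sq θ]
    have h4 : 1 + (3 - 4 * Real.cos θ ^ 2) = 4 * Real.sin θ ^ 2 := by nlinarith [hsin2]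
    rw [hm1, h4]
    field_simp
    ring
  rw [integral_eq_sub_of_hasDerivAt_of_le hab hFcont hderiv hfint]
  -- endpoint evaluations
  have h56c : Real.cos (5*π/6) = -(Real.sqrt 3/2) := by
    rw [show (5*π/6 : ℝ) = π - π/6 by ring, Real.cos_pi_sub, Real.cos_pi_div_six]
  have h56s : Real.sin (5*π/6) = 1/2 := by
    rw [show (5*π/6 : ℝ) = π - π/6 by ring, Real.sin_pi_sub, Real.sin_pi_div_six]
  have h3c : Real.cos (π/3) = 1/2 := Real.cos_pi_div_three
  have h3s : Real.sin (π/3) = Real.sqrt 3/2 := Real.sin_pi_div_three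
  have hFb : F (5*π/6) = 0 := by
    rw [hF]; simp only [h56c, h56s]
    have e1 : -(1 / Real.sqrt 3) * (-(Real.sqrt 3/2) / (1/2)) = 1 := by
      field_simp
    have e2 : (3 : ℝ) - 4 * (-(Real.sqrt 3/2)) ^ 2 = 0 := by
      nlinarith [hs3sq]
    rw [e1, e2, Real.arccos_one, Real.sqrt_zero, Real.arctan_zero]; ring
  have hFa : F (π/3) = -(1/2) * Real.arccos (-(1/3)) - Real.arctan (Real.sqrt 2) := by
    rw [hF]; simp only [h3c, h3s]
    have e1 : -(1 / Real.sqrt 3) * ((1/2) / (Real.sqrt 3/2)) = -(1/3) := by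
      have h3ne : Real.sqrt 3 ≠ 0 := hs3.ne'
      field_simp
      linarith [hs3sq]
    have e2 : (3 : ℝ) - 4 * (1/2) ^ 2 = 2 := by norm_num
    rw [e1, e2]
  rw [hFb, hFa]
  -- arctan √2 = π/4 + (1/2) arcsin (1/3)
  have hat : Real.arctan (Real.sqrt 2) = π/4 + (1/2) * Real.arcsin (1/3) := by
    have ha2 : (0:ℝ) < Real.arctan (Real.sqrt 2) := by
      have := Real.arctan_strictMono (show (0:ℝ) < Real.sqrt 2 by positivity)
      rwa [Real.arctan_zero] at this
    have ha3 : Real.arctan (Real.sqrt 2) < π/2 := Real.arctan_lt_pi_div_two _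
    have hsin : Real.sin (2 * Real.arctan (Real.sqrt 2) - π/2) = 1/3 := by
      rw [Real.sin_sub, Real.sin_pi_div_two, Real.cos_pi_div_two]
      have hc2 : Real.cos (2 * Real.arctan (Real.sqrt 2)) = -(1/3) := by
        rw [Real.cos_two_mul, Real.cos_arctan]
        rw [Real.sq_sqrt (by norm_num : (2:ℝ) ≥ 0)]
        rw [div_pow, one_pow, Real.sq_sqrt (by norm_num : (0:ℝ) ≤ 1 + 2)]
        norm_num
      rw [hc2]; ring
    have := Real.arcsin_sin (x := 2 * Real.arctan (Real.sqrt 2) - π/2)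
      (by linarith) (by linarith)
    rw [hsin] at this
    linarith
  rw [hat]; ring
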